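/- Suppose p̲·I ⪯ Pᵢ[k] for all i and k with p̲ > 0, θ̄ ≥ 1, and Qᵢ[k] = λ_P Pᵢ[k]⁻¹ + (1/θ̄) Σ_{j∈𝒩ᵢ} λⱼ Qⱼ[k−1] for coefficients λ_P, λⱼ ∈ [0,1] with λ_P + Σⱼ λⱼ ≤ 1 (possibly depending on i and k), with initialization Qᵢ[0] = Pᵢ[0]⁻¹. Then Qᵢ[k] ⪯ (1/p̲)·I for all i and all k ≥ 0. -/

import Mathlib

lemma psd_smul {n : ℕ} {A : Matrix (Fin n) (Fin n) ℝ} (hA : A.PosSemidef)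
    {c : ℝ} (hc : 0 ≤ c) : (c • A).PosSemidef := by
  constructor
  · rw [Matrix.IsHermitian, Matrix.conjTranspose_smul, star_trivial, hA.1.eq]
  · intro x
    exact (hA.smul hc).2 x

lemma psd_sum {n : ℕ} {ι : Type*} (s : Finset ι) (f : ι → Matrix (Fin n) (Fin n) ℝ)
    (h : ∀ i ∈ s, (f i).PosSemidef) : (∑ i ∈ s, f i).PosSemidef := by
  classical
  induction s using Finset.induction with
  | empty => simpa using Matrix.PosSemidef.zero
  | insert a s hx ih =>
    rw [Finset.sum_insert hx]
    exact (h a (by simp)).add (ih fun i hi => h i (Finset.mem_insert_of_mem hi))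

open scoped MatrixOrder in
lemma inv_bound {n : ℕ} {A : Matrix (Fin n) (Fin n) ℝ} (hA : A.PosDef)
    {p : ℝ} (hp : 0 < p) (hb : (A - p • (1 : Matrix (Fin n) (Fin n) ℝ)).PosSemidef) :
    (p⁻¹ • (1 : Matrix (Fin n) (Fin n) ℝ) - A⁻¹).PosSemidef := by
  have hAinv : (A⁻¹).PosDef := hA.inv
  set S := CFC.sqrt (A⁻¹) with hS
  have hSsd : S.PosSemidef := Matrix.nonneg_iff_posSemidef.mp (CFC.sqrt_nonneg _)
  have hSS : S * S = A⁻¹ := CFC.sqrt_mul_sqrt_self _ hAinv.posSemidef.nonneg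
  clear_value S
  have hAu : IsUnit A.det := hA.det_pos.ne'.isUnit
  have hSdet : IsUnit S.det := by
    have : S.det * S.det = (A⁻¹).det := by rw [← Matrix.det_mul, hSS]
    have h2 : IsUnit (A⁻¹).det := by
      simpa using (Matrix.isUnit_nonsing_inv_det A hAu)
    rw [← this] at h2
    exact isUnit_of_mul_isUnit_left h2
  have key : S * (A - p • 1) * S = (1 : Matrix (Fin n) (Fin n) ℝ) - p • A⁻¹ := by
    have hApow : A = S⁻¹ * S⁻¹ := by
      rw [← Matrix.mul_inv_rev, hSS, Matrix.nonsing_inv_nonsing_inv A hAu]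
    have hSAS : S * A * S = 1 := by
      rw [hApow, ← Matrix.mul_assoc, Matrix.mul_assoc (S * S⁻¹),
        Matrix.mul_nonsing_inv S hSdet, Matrix.nonsing_inv_mul S hSdet,
        Matrix.one_mul]
    rw [mul_sub, sub_mul, hSAS]
    congr 1
    rw [Matrix.mul_smul, Matrix.smul_mul, Matrix.mul_one, hSS]
  have hpsd : ((1 : Matrix (Fin n) (Fin n) ℝ) - p • A⁻¹).PosSemidef := by
    rw [← key]
    have h := hb.conjTranspose_mul_mul_same S
    rwa [hSsd.1.eq] at h
  have := psd_smul hpsd (le_of_lt (inv_pos.mpr hp))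
  have heq : p⁻¹ • ((1 : Matrix (Fin n) (Fin n) ℝ) - p • A⁻¹)
      = p⁻¹ • (1 : Matrix (Fin n) (Fin n) ℝ) - A⁻¹ := by
    rw [smul_sub, smul_smul, inv_mul_cancel₀ hp.ne', one_smul]
  rwa [heq] at this

/-- boundedness of the iterates. If `p̲ I ⪯ Pᵢ[k]` for all `i, k` with
`p̲ > 0`, `θ̄ ≥ 1`, the iterates satisfy the sub-convex recursion
`Qᵢ[k] = λ_P Pᵢ[k]⁻¹ + (1/θ̄) Σ_{j∈𝒩ᵢ} λⱼ Qⱼ[k−1]` with `λ_P, λⱼ ∈ [0,1]`,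
`λ_P + Σⱼ λⱼ ≤ 1` (coefficients possibly depending on `i` and `k`), and
`Qᵢ[0] = Pᵢ[0]⁻¹`, then `Qᵢ[k] ⪯ (1/p̲) I` for all `i` and all `k ≥ 0`. -/
theorem stmt8 {n N : ℕ} (P : ℕ → Fin N → Matrix (Fin n) (Fin n) ℝ)
    (hP : ∀ k i, (P k i).PosDef)
    (p θ : ℝ) (hp : 0 < p) (hθ : 1 ≤ θ)
    (hPbound : ∀ k i, ((P k i) - p • (1 : Matrix (Fin n) (Fin n) ℝ)).PosSemidef)
    (𝒩 : Fin N → Finset (Fin N))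
    (lP : ℕ → Fin N → ℝ) (l : ℕ → Fin N → Fin N → ℝ)
    (hlP : ∀ k i, lP k i ∈ Set.Icc (0 : ℝ) 1)
    (hl : ∀ k i j, l k i j ∈ Set.Icc (0 : ℝ) 1)
    (hsum : ∀ k i, lP k i + ∑ j ∈ 𝒩 i, l k i j ≤ 1)
    (Q : ℕ → Fin N → Matrix (Fin n) (Fin n) ℝ)
    (hQ0 : ∀ i, Q 0 i = (P 0 i)⁻¹)
    (hQrec : ∀ k i, Q (k + 1) i =
      lP (k + 1) i • (P (k + 1) i)⁻¹ + θ⁻¹ • ∑ j ∈ 𝒩 i, l (k + 1) i j • Q k j) :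
    ∀ k i, (p⁻¹ • (1 : Matrix (Fin n) (Fin n) ℝ) - Q k i).PosSemidef := by
  intro k
  induction k with
  | zero =>
    intro i
    rw [hQ0 i]
    exact inv_bound (hP 0 i) hp (hPbound 0 i)
  | succ k ih =>
    intro i
    have hθ0 : (0:ℝ) ≤ θ⁻¹ := inv_nonneg.mpr (le_trans zero_le_one hθ)
    have hlsum : (0:ℝ) ≤ ∑ j ∈ 𝒩 i, l (k+1) i j :=
      Finset.sum_nonneg fun j _ => (hl (k+1) i j).1
    have hc : (0:ℝ) ≤ 1 - lP (k+1) i - θ⁻¹ * ∑ j ∈ 𝒩 i, l (k+1) i j := by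
      have h1 : θ⁻¹ * ∑ j ∈ 𝒩 i, l (k+1) i j ≤ ∑ j ∈ 𝒩 i, l (k+1) i j := by
        nlinarith [inv_le_one_of_one_le₀ hθ]
      nlinarith [hsum (k+1) i]
    have key : p⁻¹ • (1 : Matrix (Fin n) (Fin n) ℝ) - Q (k+1) i =
        lP (k+1) i • (p⁻¹ • (1 : Matrix (Fin n) (Fin n) ℝ) - (P (k+1) i)⁻¹)
        + θ⁻¹ • ∑ j ∈ 𝒩 i, l (k+1) i j • (p⁻¹ • (1 : Matrix (Fin n) (Fin n) ℝ) - Q k j)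
        + (1 - lP (k+1) i - θ⁻¹ * ∑ j ∈ 𝒩 i, l (k+1) i j) •
            (p⁻¹ • (1 : Matrix (Fin n) (Fin n) ℝ)) := by
      have hS1 : ∑ j ∈ 𝒩 i, l (k+1) i j • (p⁻¹ • (1 : Matrix (Fin n) (Fin n) ℝ) - Q k j)
          = (∑ j ∈ 𝒩 i, l (k+1) i j) • (p⁻¹ • (1 : Matrix (Fin n) (Fin n) ℝ))
            - ∑ j ∈ 𝒩 i, l (k+1) i j • Q k j := by
        simp [smul_sub, Finset.sum_sub_distrib, ← Finset.sum_smul]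
      rw [hQrec k i, hS1]
      module
    rw [key]
    refine ((psd_smul ?_ (hlP (k+1) i).1).add (psd_smul (psd_sum _ _ fun j _ =>
      psd_smul (ih j) (hl (k+1) i j).1) hθ0)).add (psd_smul (psd_smul .one
      (le_of_lt (inv_pos.mpr hp))) hc)
    exact inv_bound (hP (k+1) i) hp (hPbound (k+1) i)
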